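/- arXiv:1804.06566 — 6 statements merged into one kernel-verified Lean document; each statement's English description precedes it below -/
import Mathlib

section
/- For every t ≥ 0 and all x, v ∈ ℝ³, the homogeneous modulation is controlled by the distance to the light cone: |d(t,x,v)| ≤ 2·| t − |x + t·v̂| |; in particular |d(t,x,v)| ≤ 2·(1 + | t − |x + t·v̂| |). -/
set_option maxHeartbeats 1000000


open scoped RealInnerProductSpace

noncomputable section

abbrev E3 : Type := EuclideanSpace ℝ (Fin 3)

/-- The relativistic velocity `v̂ = v / √(1+|v|²)`. -/
def vhat (v : E3) : E3 := (Real.sqrt (1 + ‖v‖ ^ 2))⁻¹ • v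

/-- The homogeneous modulation `d(t,x,v)`. -/
def dmod (t : ℝ) (x v : E3) : ℝ :=
  t / (1 + ‖v‖ ^ 2) -
    (⟪x, v⟫ + Real.sqrt (⟪x, v⟫ ^ 2 + ‖x‖ ^ 2)) / Real.sqrt (1 + ‖v‖ ^ 2)

lemma vhat_norm (v : E3) : ‖vhat v‖ = (Real.sqrt (1 + ‖v‖ ^ 2))⁻¹ * ‖v‖ := by
  rw [vhat, norm_smul, Real.norm_eq_abs, abs_of_pos]
  exact inv_pos.mpr (Real.sqrt_pos.mpr (by positivity))

lemma norm_sq_aux (t : ℝ) (ht : 0 ≤ t) (x v : E3) :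
    ‖x + t • vhat v‖ ^ 2 = ‖x‖ ^ 2 + 2 * (t * ((Real.sqrt (1 + ‖v‖ ^ 2))⁻¹ * ⟪x, v⟫))
      + t ^ 2 * ((Real.sqrt (1 + ‖v‖ ^ 2))⁻¹ * ‖v‖) ^ 2 := by
  rw [norm_add_sq_real, real_inner_smul_right, vhat, real_inner_smul_right,
    norm_smul, Real.norm_eq_abs, abs_of_nonneg ht, norm_smul, Real.norm_eq_abs,
    abs_of_pos (inv_pos.mpr (Real.sqrt_pos.mpr (by positivity : (0:ℝ) < 1 + ‖v‖ ^ 2)))]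
  ring

/-- The homogeneous modulation is controlled by the distance to the light cone. -/
theorem stmt1 (t : ℝ) (ht : 0 ≤ t) (x v : E3) :
    |dmod t x v| ≤ 2 * |t - ‖x + t • vhat v‖| ∧
      |dmod t x v| ≤ 2 * (1 + |t - ‖x + t • vhat v‖|) := by
  have hL2 : (Real.sqrt (1 + ‖v‖ ^ 2)) ^ 2 = 1 + ‖v‖ ^ 2 :=
    Real.sq_sqrt (by positivity)
  have hNsq := norm_sq_aux t ht x v
  set L : ℝ := Real.sqrt (1 + ‖v‖ ^ 2) with hLdef
  have hL1 : 1 ≤ L := by nlinarith [Real.sqrt_nonneg (1 + ‖v‖ ^ 2)]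
  have hL0 : (0:ℝ) < L := lt_of_lt_of_le one_pos hL1
  have hLne : L ≠ 0 := ne_of_gt hL0
  have hvL : ‖v‖ ≤ L := by nlinarith [norm_nonneg v]
  set a : ℝ := ⟪x, v⟫ with hadef
  set r : ℝ := ‖x‖ with hrdef
  have hr0 : 0 ≤ r := norm_nonneg x
  have hs2 : (Real.sqrt (a ^ 2 + r ^ 2)) ^ 2 = a ^ 2 + r ^ 2 :=
    Real.sq_sqrt (by positivity)
  set s : ℝ := Real.sqrt (a ^ 2 + r ^ 2) with hsdef
  have hs0 : 0 ≤ s := Real.sqrt_nonneg _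
  have har : |a| ≤ r * ‖v‖ := by
    simpa [hadef, hrdef] using abs_real_inner_le_norm x v
  have hsa : |a| ≤ s := by nlinarith [sq_abs a, abs_nonneg a, sq_nonneg r]
  have has : a ≤ s := (abs_le.mp hsa).2
  have has' : -s ≤ a := (abs_le.mp hsa).1
  have ha2 : a ^ 2 ≤ r ^ 2 * ‖v‖ ^ 2 := by
    nlinarith [mul_self_le_mul_self (abs_nonneg a) har, sq_abs a]
  have hsr : r ≤ s := by nlinarith [sq_nonneg a]
  have hsL : s ≤ L * r := by
    have h := Real.sqrt_le_sqrt (show a ^ 2 + r ^ 2 ≤ (L * r) ^ 2 by nlinarith)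
    rwa [Real.sqrt_sq (by positivity)] at h
  have hvhat1 : ‖vhat v‖ ≤ 1 := by
    rw [vhat_norm, ← hLdef, inv_mul_le_iff₀ hL0]
    simpa using hvL
  set N : ℝ := ‖x + t • vhat v‖ with hNdef
  have hN0 : 0 ≤ N := norm_nonneg _
  have hNle : N ≤ r + t := by
    calc N ≤ ‖x‖ + ‖t • vhat v‖ := norm_add_le _ _
    _ ≤ r + t := by
        rw [norm_smul, Real.norm_eq_abs, abs_of_nonneg ht]
        nlinarith [hvhat1]
  set T : ℝ := t / L with hTdef
  have hT0 : 0 ≤ T := div_nonneg ht hL0.le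
  have htT : t = T * L := by rw [hTdef]; field_simp
  have hNsq'' : N ^ 2 = r ^ 2 + 2 * T * a + T ^ 2 * ‖v‖ ^ 2 := by
    rw [hNsq, hTdef]; ring
  set u : ℝ := T - a - s with hudef
  set w : ℝ := T - a + s with hwdef
  have hw0 : 0 ≤ w := by rw [hwdef]; linarith
  have hfact : t ^ 2 - N ^ 2 = u * w := by
    rw [htT, hudef, hwdef]
    linear_combination (-1) * hNsq'' + hs2 + T ^ 2 * hL2
  have hrv : r * ‖v‖ ≤ r * L := mul_le_mul_of_nonneg_left hvL hr0
  have hkey : r ≤ 2 * L * (s - a) := by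
    rcases eq_or_lt_of_le hr0 with h0 | hrpos
    · nlinarith
    · have hsum : 0 ≤ 2 * L * r - (s + a) := by
        have := le_abs_self a
        linarith [har, hsL, hrv]
      nlinarith [mul_nonneg (sub_nonneg.mpr has) hsum, hs2, mul_pos hL0 hrpos]
  have htN : t + N ≤ 2 * L * w := by
    have h2lw : 2 * L * w = 2 * t + 2 * L * (s - a) := by
      rw [hwdef, htT]; ring
    rw [h2lw]
    linarith
  have hmain : |u| ≤ 2 * L * |t - N| := by
    rcases eq_or_lt_of_le hw0 with hwz | hwpos
    · have ht0 : T = 0 := by rw [hwdef] at hwz; linarith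
      have hsa0 : s = a := by rw [hwdef] at hwz; linarith
      have hr00 : r = 0 := by nlinarith
      have ha0 : a = 0 := by
        have h := har; rw [hr00] at h; simpa using h
      have hu0 : u = 0 := by rw [hudef, ht0, hsa0, ha0]; ring
      rw [hu0, abs_zero]
      positivity
    · have h1 : |u| * w = |t - N| * (t + N) := by
        have huw : u * w = (t - N) * (t + N) := by rw [← hfact]; ring
        calc |u| * w = |u * w| := by rw [abs_mul, abs_of_pos hwpos]
        _ = |(t - N) * (t + N)| := by rw [huw]
        _ = |t - N| * (t + N) := by rw [abs_mul, abs_of_nonneg (show (0:ℝ) ≤ t + N by linarith)]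
      have h2 : |u| * w ≤ |t - N| * (2 * L * w) := by
        rw [h1]
        exact mul_le_mul_of_nonneg_left htN (abs_nonneg _)
      exact le_of_mul_le_mul_right (by linarith) hwpos
  have hdm : dmod t x v = u / L := by
    rw [dmod, hudef, hTdef, ← hadef, ← hrdef, ← hsdef, ← hLdef, ← hL2]
    field_simp
    ring
  have habs : |dmod t x v| = |u| / L := by
    rw [hdm, abs_div, abs_of_pos hL0]
  have h1 : |dmod t x v| ≤ 2 * |t - N| := by
    rw [habs, div_le_iff₀ hL0]
    calc |u| ≤ 2 * L * |t - N| := hmain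
    _ = 2 * |t - N| * L := by ring
  exact ⟨h1, h1.trans (by linarith [abs_nonneg (t - N)])⟩
end
end

section
/- There exists a universal constant c > 0 such that for all v, η ∈ ℝ³ with v ≠ 0 and η ≠ 0 one has the hidden null structure estimate: |η| − (v·η)/√(1+|v|²) ≥ c·( |η|/(1+|v|²) + Σ_{i=1}^{3} ((eᵢ × v)·η)² / (|v|²·|η|) ). Consequently, if |η| − (v·η)/√(1+|v|²) ≤ δ·|η| for some δ > 0, then 1/(1+|v|²) ≤ δ/c and Σ_{i=1}^{3} ((eᵢ × v)·η)²/(|v|²|η|²) ≤ δ/c. -/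
open scoped RealInnerProductSpace

noncomputable section

/-- The standard orthonormal basis vectors `e₁, e₂, e₃` of `ℝ³`. -/
def stdB (i : Fin 3) : E3 := EuclideanSpace.single i (1 : ℝ)

/-- The cross product on `ℝ³`. -/
def cross3 (a b : E3) : E3 :=
  EuclideanSpace.single 0 (a 1 * b 2 - a 2 * b 1) +
    EuclideanSpace.single 1 (a 2 * b 0 - a 0 * b 2) +
    EuclideanSpace.single 2 (a 0 * b 1 - a 1 * b 0)

set_option maxHeartbeats 1000000 in
/-- Lagrange's identity: the sum of squares `∑ ((eᵢ × v)·η)²` equals `|v|²|η|² - (v·η)²`. -/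
lemma sum_cross_sq (v η : E3) :
    ∑ i : Fin 3, ⟪cross3 (stdB i) v, η⟫ ^ 2 = ‖v‖ ^ 2 * ‖η‖ ^ 2 - ⟪v, η⟫ ^ 2 := by
  have hv : ‖v‖ ^ 2 = ⟪v, v⟫ := (real_inner_self_eq_norm_sq v).symm
  have hη : ‖η‖ ^ 2 = ⟪η, η⟫ := (real_inner_self_eq_norm_sq η).symm
  rw [hv, hη]
  simp only [cross3, stdB, PiLp.inner_apply, RCLike.inner_apply, conj_trivial,
    Fin.sum_univ_three, PiLp.add_apply, EuclideanSpace.single_apply, Fin.reduceEq,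
    if_true, if_false, ite_true, ite_false, reduceIte]
  ring

/-- The core estimate with constant `c = 1/2`. -/
lemma key_est (v η : E3) (hv : v ≠ 0) (hη : η ≠ 0) :
    (1/2 : ℝ) * (‖η‖ / (1 + ‖v‖ ^ 2) +
        ∑ i : Fin 3, ⟪cross3 (stdB i) v, η⟫ ^ 2 / (‖v‖ ^ 2 * ‖η‖)) ≤
      ‖η‖ - ⟪v, η⟫ / Real.sqrt (1 + ‖v‖ ^ 2) := by
  rw [← Finset.sum_div, sum_cross_sq]
  set V := ‖v‖ with hVdef
  set H := ‖η‖ with hHdef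
  set A := ⟪v, η⟫ with hAdef
  have hV : 0 < V := norm_pos_iff.mpr hv
  have hH : 0 < H := norm_pos_iff.mpr hη
  have hA : A ^ 2 ≤ V ^ 2 * H ^ 2 := by
    have h1 := abs_real_inner_le_norm v η
    nlinarith [abs_nonneg A, sq_abs A]
  set g := Real.sqrt (1 + V ^ 2) with hgdef
  have hgpos : 0 < g := Real.sqrt_pos.mpr (by positivity)
  have hg2 : g ^ 2 = 1 + V ^ 2 := Real.sq_sqrt (by positivity)
  rw [← hg2]
  have hgne : g ≠ 0 := ne_of_gt hgpos
  have hVne : V ≠ 0 := ne_of_gt hV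
  have hHne : H ≠ 0 := ne_of_gt hH
  rw [div_add_div _ _ (by positivity) (by positivity)]
  rw [show (1/2:ℝ) * ((H * (V ^ 2 * H) + g ^ 2 * (V ^ 2 * H ^ 2 - A ^ 2)) / (g ^ 2 * (V ^ 2 * H)))
      = (H * (V ^ 2 * H) + g ^ 2 * (V ^ 2 * H ^ 2 - A ^ 2)) / (2 * (g ^ 2 * (V ^ 2 * H))) by ring]
  rw [div_le_iff₀ (by positivity), sub_mul, div_mul_eq_mul_div, le_sub_iff_add_le,
    ← le_sub_iff_add_le', div_le_iff₀ hgpos]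
  have hz : g * (V^2*H^2) * g^2 = g * (V^2*H^2) * (1+V^2) := by rw [hg2]
  nlinarith [mul_nonneg hgpos.le (sq_nonneg (V ^ 2 * H - g * A)), hz]

/-- The hidden null structure estimate for the phase `|η| - v̂·η`, together with its
consequence near the time-resonance set. -/
theorem stmt2 :
    ∃ c : ℝ, 0 < c ∧
      (∀ v η : E3, v ≠ 0 → η ≠ 0 →
        c * (‖η‖ / (1 + ‖v‖ ^ 2) +
            ∑ i : Fin 3, ⟪cross3 (stdB i) v, η⟫ ^ 2 / (‖v‖ ^ 2 * ‖η‖)) ≤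
          ‖η‖ - ⟪v, η⟫ / Real.sqrt (1 + ‖v‖ ^ 2)) ∧
      (∀ v η : E3, ∀ δ : ℝ, v ≠ 0 → η ≠ 0 → 0 < δ →
        ‖η‖ - ⟪v, η⟫ / Real.sqrt (1 + ‖v‖ ^ 2) ≤ δ * ‖η‖ →
        1 / (1 + ‖v‖ ^ 2) ≤ δ / c ∧
          (∑ i : Fin 3, ⟪cross3 (stdB i) v, η⟫ ^ 2 / (‖v‖ ^ 2 * ‖η‖ ^ 2)) ≤ δ / c) := by
  refine ⟨1/2, by norm_num, fun v η hv hη => key_est v η hv hη, ?_⟩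
  intro v η δ hv hη hδ hle
  have hk := (key_est v η hv hη).trans hle
  have hV : 0 < ‖v‖ := norm_pos_iff.mpr hv
  have hH : 0 < ‖η‖ := norm_pos_iff.mpr hη
  have hS : 0 ≤ ∑ i : Fin 3, ⟪cross3 (stdB i) v, η⟫ ^ 2 / (‖v‖ ^ 2 * ‖η‖) := by
    apply Finset.sum_nonneg
    intro i _
    positivity
  have hT : 0 ≤ ‖η‖ / (1 + ‖v‖ ^ 2) := by positivity
  rw [show δ / (1/2 : ℝ) = 2 * δ by ring]
  constructor
  · have h1 : ‖η‖ / (1 + ‖v‖ ^ 2) ≤ 2 * δ * ‖η‖ := by nlinarith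
    rw [div_le_iff₀ (by positivity)] at h1
    rw [div_le_iff₀ (by positivity)]
    nlinarith
  · have h2 : (∑ i : Fin 3, ⟪cross3 (stdB i) v, η⟫ ^ 2) / (‖v‖ ^ 2 * ‖η‖) ≤ 2 * δ * ‖η‖ := by
      rw [← Finset.sum_div] at hk
      nlinarith
    rw [← Finset.sum_div, div_le_iff₀ (by positivity)]
    rw [div_le_iff₀ (by positivity)] at h2
    nlinarith
end
end

section
/- There exists a universal constant c > 0 such that for every sign μ ∈ {+1, −1}, every j ∈ {1,2,3}, every v ∈ ℝ³ with v ≠ 0, and every ξ ∈ ℝ³: |ξ| − μ·(v·ξ)/√(1+|v|²) ≥ c·|(e_j × v)·ξ| / ( |v|·(1+|v|) ). -/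
open scoped RealInnerProductSpace

noncomputable section

lemma inner3 (x y : E3) : ⟪x, y⟫ = x 0 * y 0 + x 1 * y 1 + x 2 * y 2 := by
  simp [PiLp.inner_apply, Fin.sum_univ_three, RCLike.inner_apply, mul_comm]
lemma cross3_apply (a b : E3) :
    cross3 a b 0 = a 1 * b 2 - a 2 * b 1 ∧ cross3 a b 1 = a 2 * b 0 - a 0 * b 2 ∧
    cross3 a b 2 = a 0 * b 1 - a 1 * b 0 := by
  refine ⟨?_, ?_, ?_⟩ <;> simp [cross3, EuclideanSpace.single_apply]
lemma stdB_apply (i k : Fin 3) : stdB i k = if k = i then 1 else 0 := by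
  simp [stdB, EuclideanSpace.single_apply]

lemma cross3_inner_right (a b : E3) : ⟪cross3 a b, b⟫ = 0 := by
  obtain ⟨h0, h1, h2⟩ := cross3_apply a b
  rw [inner3, h0, h1, h2]; ring

lemma cross3_norm_le (j : Fin 3) (v : E3) : ‖cross3 (stdB j) v‖ ≤ ‖v‖ := by
  have h : ⟪cross3 (stdB j) v, cross3 (stdB j) v⟫ ≤ ⟪v, v⟫ := by
    obtain ⟨h0, h1, h2⟩ := cross3_apply (stdB j) v
    rw [inner3, inner3, h0, h1, h2]
    fin_cases j <;> simp [stdB_apply] <;> nlinarith [sq_nonneg (v 0), sq_nonneg (v 1), sq_nonneg (v 2)]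
  rw [real_inner_self_eq_norm_sq, real_inner_self_eq_norm_sq] at h
  nlinarith [norm_nonneg (cross3 (stdB j) v), norm_nonneg v]

lemma key (a b V : ℝ) (ha : 0 ≤ a) (hb : 0 ≤ b) (hV : 0 ≤ V) :
    b / (4 * (1 + V)) ≤ Real.sqrt (a ^ 2 + b ^ 2) - V * a / Real.sqrt (1 + V ^ 2) := by
  set s := Real.sqrt (1 + V ^ 2) with hs
  have hs2 : s ^ 2 = 1 + V ^ 2 := Real.sq_sqrt (by positivity)
  have hs0 : 0 ≤ s := Real.sqrt_nonneg _
  have hs1 : 1 ≤ s := by nlinarith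
  have hsV : s ≤ 1 + V := by nlinarith
  have hVs : V ≤ s := by nlinarith
  set N := Real.sqrt (a ^ 2 + b ^ 2) with hNdef
  have hN2 : N ^ 2 = a ^ 2 + b ^ 2 := Real.sq_sqrt (by positivity)
  have hN0 : 0 ≤ N := Real.sqrt_nonneg _
  have hNab : N ≤ a + b := by nlinarith
  have hspos : (0:ℝ) < s := lt_of_lt_of_le one_pos hs1
  have hfin : b * s ≤ (N * s - V * a) * (4 * (1 + V)) := by
    rcases eq_or_lt_of_le hN0 with hNz | hNpos
    · have ha0 : a = 0 := by nlinarith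
      have hb0 : b = 0 := by nlinarith
      have hNz' : N = 0 := hNz.symm
      rw [ha0, hb0, hNz']
      simp
    · have hP : 0 < N * s + V * a := by nlinarith
      have hid : (N * s - V * a) * (N * s + V * a) = a ^ 2 + b ^ 2 + V ^ 2 * b ^ 2 := by
        linear_combination s ^ 2 * hN2 + (a ^ 2 + b ^ 2) * hs2
      have hchain : b * s * (N * s + V * a) ≤ 4 * (1 + V) * (a ^ 2 + b ^ 2 + V ^ 2 * b ^ 2) := by
        have hT : (0:ℝ) < 1 + V := by positivity
        have h1 : N * s + V * a ≤ 2 * (a + b) * (1 + V) := by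
          nlinarith [mul_le_mul hNab hsV hs0 (by positivity : (0:ℝ) ≤ a + b),
            mul_nonneg hV ha, mul_nonneg hV hb]
        have h2 : b * s * (N * s + V * a) ≤ (b * (1 + V)) * (2 * (a + b) * (1 + V)) :=
          mul_le_mul (by nlinarith) h1 (le_of_lt hP) (by positivity)
        have hcore : b * (2 * (a + b) * (1 + V)) ≤ 4 * (a ^ 2 + b ^ 2 + V ^ 2 * b ^ 2) := by
          nlinarith [sq_nonneg (a - b), sq_nonneg (a - V * b), sq_nonneg (b - V * b)]
        have h3 : (b * (1 + V)) * (2 * (a + b) * (1 + V)) ≤ 4 * (1 + V) * (a ^ 2 + b ^ 2 + V ^ 2 * b ^ 2) := by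
          calc (b * (1 + V)) * (2 * (a + b) * (1 + V)) = (1 + V) * (b * (2 * (a + b) * (1 + V))) := by ring
            _ ≤ (1 + V) * (4 * (a ^ 2 + b ^ 2 + V ^ 2 * b ^ 2)) := mul_le_mul_of_nonneg_left hcore (le_of_lt hT)
            _ = 4 * (1 + V) * (a ^ 2 + b ^ 2 + V ^ 2 * b ^ 2) := by ring
        linarith
      nlinarith [hchain, hid, hP]
  have heq : N - V * a / s = (N * s - V * a) / s := by field_simp
  rw [heq, div_le_div_iff₀ (by positivity) hspos]
  linarith [hfin]

lemma aux (μ : ℝ) (hμ : μ = 1 ∨ μ = -1) (v ξ w : E3) (hv : v ≠ 0)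
    (hwv : ⟪w, v⟫ = 0) (hwn : ‖w‖ ≤ ‖v‖) :
    1/4 * |⟪w, ξ⟫| / (‖v‖ * (1 + ‖v‖)) ≤ ‖ξ‖ - μ * ⟪v, ξ⟫ / Real.sqrt (1 + ‖v‖ ^ 2) := by
  have hV : 0 < ‖v‖ := norm_pos_iff.mpr hv
  set p : ℝ := ⟪v, ξ⟫ with hp
  set b : ℝ := ‖ξ - (p / ‖v‖ ^ 2) • v‖ with hbdef
  have hb0 : 0 ≤ b := norm_nonneg _
  have hb2 : b ^ 2 = ‖ξ‖ ^ 2 - p ^ 2 / ‖v‖ ^ 2 := by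
    have h := norm_sub_sq_real ξ ((p / ‖v‖ ^ 2) • v)
    have hin : ⟪ξ, v⟫ = p := by rw [real_inner_comm]
    rw [real_inner_smul_right, hin, norm_smul, Real.norm_eq_abs] at h
    rw [hbdef, h, mul_pow, sq_abs, div_pow]
    field_simp
    ring
  set a : ℝ := |p| / ‖v‖ with hadef
  have ha0 : 0 ≤ a := by positivity
  have hxi : ‖ξ‖ = Real.sqrt (a ^ 2 + b ^ 2) := by
    have h : a ^ 2 + b ^ 2 = ‖ξ‖ ^ 2 := by
      rw [hadef, div_pow, sq_abs, hb2]; field_simp; ring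
    rw [h, Real.sqrt_sq (norm_nonneg _)]
  have hq : |⟪w, ξ⟫| ≤ ‖v‖ * b := by
    have h1 : ⟪w, ξ - (p / ‖v‖ ^ 2) • v⟫ = ⟪w, ξ⟫ := by
      rw [inner_sub_right, real_inner_smul_right, hwv]; ring
    calc |⟪w, ξ⟫| = |⟪w, ξ - (p / ‖v‖ ^ 2) • v⟫| := by rw [h1]
      _ ≤ ‖w‖ * b := abs_real_inner_le_norm _ _
      _ ≤ ‖v‖ * b := mul_le_mul_of_nonneg_right hwn hb0
  have hkey := key a b ‖v‖ ha0 hb0 (norm_nonneg v)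
  rw [← hxi] at hkey
  have hstep1 : 1/4 * |⟪w, ξ⟫| / (‖v‖ * (1 + ‖v‖)) ≤ b / (4 * (1 + ‖v‖)) := by
    rw [div_le_div_iff₀ (by positivity) (by positivity)]
    have h2 := mul_le_mul_of_nonneg_right hq (le_of_lt (by positivity : (0:ℝ) < 1 + ‖v‖))
    nlinarith [abs_nonneg (⟪w, ξ⟫ : ℝ)]
  have hstep3 : μ * p ≤ ‖v‖ * a := by
    have h : ‖v‖ * a = |p| := by rw [hadef]; field_simp
    rw [h]
    rcases hμ with h' | h' <;> rw [h'] <;> simp [neg_le_abs, le_abs_self]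
  have hs0 : 0 < Real.sqrt (1 + ‖v‖ ^ 2) := Real.sqrt_pos.mpr (by positivity)
  have hdiv : μ * p / Real.sqrt (1 + ‖v‖ ^ 2) ≤ ‖v‖ * a / Real.sqrt (1 + ‖v‖ ^ 2) :=
    by gcongr
  linarith [hkey, hstep1, hdiv]

/-- The good rotational symbol `(e_j × v)·ξ / |v|` is dominated, up to the factor `1+|v|`,
by the phase `|ξ| - μ v̂·ξ`. -/
theorem stmt3 :
    ∃ c : ℝ, 0 < c ∧
      ∀ μ : ℝ, (μ = 1 ∨ μ = -1) → ∀ (j : Fin 3) (v : E3), v ≠ 0 → ∀ ξ : E3,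
        c * |⟪cross3 (stdB j) v, ξ⟫| / (‖v‖ * (1 + ‖v‖)) ≤
          ‖ξ‖ - μ * ⟪v, ξ⟫ / Real.sqrt (1 + ‖v‖ ^ 2) := by
  refine ⟨1/4, by norm_num, ?_⟩
  intro μ hμ j v hv ξ
  exact aux μ hμ v ξ _ hv (cross3_inner_right (stdB j) v) (cross3_norm_le j v)
end
end

section
/- Let v ∈ ℝ³ with v ≠ 0, and write ṽ := v/|v|. Then: (i) the derivative of the map v ↦ v̂ = v/√(1+|v|²) in the radial direction ṽ equals ṽ/(1+|v|²)^{3/2}, while its derivative in each rotational direction eᵢ×ṽ (i = 1,2,3) equals (eᵢ×ṽ)/(1+|v|²)^{1/2}; (ii) every u ∈ ℝ³ decomposes as u = ṽ·(ṽ·u) + Σ_{i=1}^{3} (eᵢ×ṽ)·((eᵢ×ṽ)·u). -/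
open scoped RealInnerProductSpace

noncomputable section

lemma fderiv_vhat (v w : E3) :
    fderiv ℝ vhat v w = (Real.sqrt (1 + ‖v‖^2))⁻¹ • w
      + (-(⟪v, w⟫) / ((1 + ‖v‖^2) * Real.sqrt (1 + ‖v‖^2))) • v := by
  have hq : (0:ℝ) < 1 + ‖v‖^2 := by positivity
  have h1 : HasFDerivAt (fun x : E3 => (1:ℝ) + ⟪x, x⟫)
      ((fderivInnerCLM ℝ (v,v)).comp ((ContinuousLinearMap.id ℝ E3).prod (ContinuousLinearMap.id ℝ E3))) v :=
    ((hasFDerivAt_id v).inner ℝ (hasFDerivAt_id v)).const_add 1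
  have hq2 : (1:ℝ) + ‖v‖^2 = 1 + ⟪v, v⟫ := by rw [real_inner_self_eq_norm_sq]
  have hsq : Real.sqrt (1 + ⟪v, v⟫) ≠ 0 := by rw [← hq2]; positivity
  have h3 : HasDerivAt (fun t : ℝ => (Real.sqrt t)⁻¹)
      (-(1/(2*Real.sqrt (1 + ⟪v, v⟫)))/(Real.sqrt (1 + ⟪v, v⟫))^2) (1 + ⟪v, v⟫) :=
    (Real.hasDerivAt_sqrt (by rw [← hq2]; exact hq.ne')).inv hsq
  have h4 := h3.comp_hasFDerivAt v h1
  have h5 := h4.smul (hasFDerivAt_id v)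
  have h6 : HasFDerivAt vhat
      (((fun t => (Real.sqrt t)⁻¹) ∘ fun x : E3 => 1 + ⟪x, x⟫) v • ContinuousLinearMap.id ℝ E3 +
      ((-(1 / (2 * Real.sqrt (1 + ⟪v, v⟫))) / Real.sqrt (1 + ⟪v, v⟫) ^ 2) •
            (fderivInnerCLM ℝ (v, v)).comp ((ContinuousLinearMap.id ℝ E3).prod (ContinuousLinearMap.id ℝ E3))).smulRight
        (id v)) v := by
    have hvh : vhat = fun x : E3 => (Real.sqrt (1 + ⟪x, x⟫))⁻¹ • x := by
      funext x; rw [vhat, real_inner_self_eq_norm_sq]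
    rw [hvh]; exact h5
  rw [h6.fderiv]
  simp only [ContinuousLinearMap.add_apply, ContinuousLinearMap.smul_apply,
    ContinuousLinearMap.smulRight_apply, ContinuousLinearMap.coe_comp', Function.comp_apply,
    ContinuousLinearMap.prod_apply, ContinuousLinearMap.coe_id', id_eq, fderivInnerCLM_apply,
    ContinuousLinearMap.id_apply]
  rw [← hq2]
  have hs2 : Real.sqrt (1 + ‖v‖^2) ^ 2 = 1 + ‖v‖^2 := Real.sq_sqrt hq.le
  rw [real_inner_comm w v]
  congr 1
  rw [hs2]
  congr 1
  have : Real.sqrt (1 + ‖v‖ ^ 2) ≠ 0 := by positivity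
  have h' : (‖v‖ ^ 2 * Real.sqrt (1 + ‖v‖ ^ 2) * 2 + Real.sqrt (1 + ‖v‖ ^ 2) * 2) ≠ 0 := by
    positivity
  field_simp
  linear_combination (-⟪w, v⟫) * mul_inv_cancel₀ h'

lemma inner_apply3 (a b : E3) : ⟪a, b⟫ = a 0 * b 0 + a 1 * b 1 + a 2 * b 2 := by
  simp [PiLp.inner_apply, Fin.sum_univ_three]
  ring

lemma cross_stdB0 (b : E3) (j : Fin 3) : cross3 (stdB 0) b j = ![0, -b 2, b 1] j := by
  fin_cases j <;> simp [cross3, stdB, EuclideanSpace.single_apply, PiLp.add_apply]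
lemma cross_stdB1 (b : E3) (j : Fin 3) : cross3 (stdB 1) b j = ![b 2, 0, -b 0] j := by
  fin_cases j <;> simp [cross3, stdB, EuclideanSpace.single_apply, PiLp.add_apply]
lemma cross_stdB2 (b : E3) (j : Fin 3) : cross3 (stdB 2) b j = ![-b 1, b 0, 0] j := by
  fin_cases j <;> simp [cross3, stdB, EuclideanSpace.single_apply, PiLp.add_apply]

lemma inner_cross_self (v : E3) (a : E3) (t : ℝ) : ⟪v, cross3 a (t • v)⟫ = 0 := by
  have h : ∀ j : Fin 3, cross3 a (t • v) j =
      ![a 1 * (t * v 2) - a 2 * (t * v 1), a 2 * (t * v 0) - a 0 * (t * v 2),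
        a 0 * (t * v 1) - a 1 * (t * v 0)] j := by
    intro j
    fin_cases j <;>
      simp [cross3, EuclideanSpace.single_apply, PiLp.add_apply, PiLp.smul_apply]
  rw [inner_apply3, h 0, h 1, h 2]
  simp only [Matrix.cons_val_zero, Matrix.cons_val_one, Matrix.head_cons,
    Matrix.cons_val_two, Matrix.tail_cons]
  ring

/-- Anisotropy of `∇_v v̂`: radial derivative decays like `(1+|v|²)^{-3/2}`, rotational
derivatives like `(1+|v|²)^{-1/2}`; and the radial/rotational decomposition of vectors. -/
theorem stmt6 (v : E3) (hv : v ≠ 0) :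
    fderiv ℝ vhat v (‖v‖⁻¹ • v) = ((1 + ‖v‖ ^ 2) ^ ((3 : ℝ) / 2))⁻¹ • (‖v‖⁻¹ • v) ∧
      (∀ i : Fin 3,
        fderiv ℝ vhat v (cross3 (stdB i) (‖v‖⁻¹ • v)) =
          ((1 + ‖v‖ ^ 2) ^ ((1 : ℝ) / 2))⁻¹ • cross3 (stdB i) (‖v‖⁻¹ • v)) ∧
      (∀ u : E3,
        u = ⟪‖v‖⁻¹ • v, u⟫ • (‖v‖⁻¹ • v) +
          ∑ i : Fin 3, ⟪cross3 (stdB i) (‖v‖⁻¹ • v), u⟫ • cross3 (stdB i) (‖v‖⁻¹ • v)) := by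
  have hn : ‖v‖ ≠ 0 := norm_ne_zero_iff.mpr hv
  have hq : (0:ℝ) < 1 + ‖v‖^2 := by positivity
  have hsqpos : (0:ℝ) < Real.sqrt (1 + ‖v‖^2) := Real.sqrt_pos.mpr hq
  have hs2 : Real.sqrt (1 + ‖v‖^2) * Real.sqrt (1 + ‖v‖^2) = 1 + ‖v‖^2 :=
    Real.mul_self_sqrt hq.le
  have hr1 : ((1:ℝ) + ‖v‖^2) ^ ((1:ℝ)/2) = Real.sqrt (1 + ‖v‖^2) :=
    (Real.sqrt_eq_rpow _).symm
  have hr3 : ((1:ℝ) + ‖v‖^2) ^ ((3:ℝ)/2) = (1 + ‖v‖^2) * Real.sqrt (1 + ‖v‖^2) := by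
    rw [show (3:ℝ)/2 = 1 + 1/2 by norm_num, Real.rpow_add hq, Real.rpow_one,
      ← Real.sqrt_eq_rpow]
  refine ⟨?_, ?_, ?_⟩
  · rw [fderiv_vhat, hr3]
    have hvw : ⟪v, ‖v‖⁻¹ • v⟫ = ‖v‖ := by
      rw [real_inner_smul_right, real_inner_self_eq_norm_sq]
      field_simp
    rw [hvw]
    rw [smul_smul, smul_smul, ← add_smul]
    congr 1
    field_simp
    ring_nf
  · intro i
    rw [fderiv_vhat, inner_cross_self, hr1]
    simp
  · intro u
    have hn2 : ‖v‖^2 = v 0 * v 0 + v 1 * v 1 + v 2 * v 2 := by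
      rw [← real_inner_self_eq_norm_sq, inner_apply3]
    have h : (‖v‖⁻¹)^2 * (v 0 * v 0 + v 1 * v 1 + v 2 * v 2) = 1 := by
      rw [← hn2]; field_simp
    set R := ⟪‖v‖⁻¹ • v, u⟫ • (‖v‖⁻¹ • v) +
        ∑ i : Fin 3, ⟪cross3 (stdB i) (‖v‖⁻¹ • v), u⟫ • cross3 (stdB i) (‖v‖⁻¹ • v) with hR
    have key : ∀ j : Fin 3, R j =
        ⟪‖v‖⁻¹ • v, u⟫ * (‖v‖⁻¹ * v j)
        + ⟪cross3 (stdB 0) (‖v‖⁻¹ • v), u⟫ * cross3 (stdB 0) (‖v‖⁻¹ • v) j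
        + ⟪cross3 (stdB 1) (‖v‖⁻¹ • v), u⟫ * cross3 (stdB 1) (‖v‖⁻¹ • v) j
        + ⟪cross3 (stdB 2) (‖v‖⁻¹ • v), u⟫ * cross3 (stdB 2) (‖v‖⁻¹ • v) j := by
      intro j
      rw [hR]
      simp only [PiLp.add_apply, PiLp.smul_apply, Finset.sum_apply, Fin.sum_univ_three,
        smul_eq_mul]
      ring
    have k0 : u 0 = R 0 := by
      rw [key 0]
      simp only [cross_stdB0, cross_stdB1, cross_stdB2, inner_apply3, PiLp.smul_apply,
        smul_eq_mul, Matrix.cons_val_zero, Matrix.cons_val_one, Matrix.head_cons,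
        Matrix.cons_val_two, Matrix.tail_cons]
      linear_combination (-(u 0)) * h
    have k1 : u 1 = R 1 := by
      rw [key 1]
      simp only [cross_stdB0, cross_stdB1, cross_stdB2, inner_apply3, PiLp.smul_apply,
        smul_eq_mul, Matrix.cons_val_zero, Matrix.cons_val_one, Matrix.head_cons,
        Matrix.cons_val_two, Matrix.tail_cons]
      linear_combination (-(u 1)) * h
    have k2 : u 2 = R 2 := by
      rw [key 2]
      simp only [cross_stdB0, cross_stdB1, cross_stdB2, inner_apply3, PiLp.smul_apply,
        smul_eq_mul, Matrix.cons_val_zero, Matrix.cons_val_one, Matrix.head_cons,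
        Matrix.cons_val_two, Matrix.tail_cons]
      linear_combination (-(u 2)) * h
    ext j
    fin_cases j
    exacts [k0, k1, k2]
end
end

section
/- Let t > 0 and x, v ∈ ℝ³ with v ≠ 0. Assume |x| ≥ 16·t/|v| and −2^{−10}·|x|²·|v|/t ≤ x·v ≤ 0. Then the distance to the light cone satisfies the lower bound | t − |x + t·v̂| | ≥ |x|² / ( 4·(t + |x|) ); in particular 1/(1 + | t − |x + t·v̂| |) ≤ 4·(t + |x|)/|x|². -/
open scoped RealInnerProductSpace

noncomputable section

set_option maxHeartbeats 1000000 in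
/-- In the region where `x·v` is negative but not too negative and `|x| ≥ 16 t/|v|`, the
point `(x, v)` is far from the light cone `t = |x + t v̂|`. -/
theorem stmt7 (t : ℝ) (ht : 0 < t) (x v : E3) (hv : v ≠ 0)
    (hx : 16 * t / ‖v‖ ≤ ‖x‖)
    (hlow : -((2 : ℝ) ^ (-(10 : ℤ)) * ‖x‖ ^ 2 * ‖v‖ / t) ≤ ⟪x, v⟫)
    (hup : ⟪x, v⟫ ≤ 0) :
    ‖x‖ ^ 2 / (4 * (t + ‖x‖)) ≤ |t - ‖x + t • vhat v‖| ∧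
      1 / (1 + |t - ‖x + t • vhat v‖|) ≤ 4 * (t + ‖x‖) / ‖x‖ ^ 2 := by
  have hvpos : 0 < ‖v‖ := norm_pos_iff.mpr hv
  have hxpos : 0 < ‖x‖ := lt_of_lt_of_le (by positivity) hx
  set s : ℝ := Real.sqrt (1 + ‖v‖ ^ 2) with hsdef
  have hs2 : s ^ 2 = 1 + ‖v‖ ^ 2 := Real.sq_sqrt (by positivity)
  have hspos : 0 < s := Real.sqrt_pos.mpr (by positivity)
  have hvs : ‖v‖ ≤ s := by nlinarith
  set u : ℝ := s⁻¹ with hudef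
  have hupos : 0 < u := inv_pos.mpr hspos
  have hus : u * s = 1 := inv_mul_cancel₀ (ne_of_gt hspos)
  have huv : u * ‖v‖ ≤ 1 := by nlinarith
  set I : ℝ := ⟪x, v⟫ with hIdef
  set r : ℝ := ‖x + t • vhat v‖ with hrdef
  have hrnn : 0 ≤ r := norm_nonneg _
  have hinner : ⟪x, t • vhat v⟫ = t * (u * I) := by
    rw [vhat, real_inner_smul_right, real_inner_smul_right, ← hsdef, ← hudef, hIdef]
  have hnv : ‖t • vhat v‖ = t * (u * ‖v‖) := by
    rw [vhat, norm_smul, norm_smul, Real.norm_eq_abs, Real.norm_eq_abs, ← hsdef,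
      abs_of_pos ht, abs_of_pos (inv_pos.mpr hspos), ← hudef]
  have hr2 : r ^ 2 = ‖x‖ ^ 2 + 2 * (t * (u * I)) + (t * (u * ‖v‖)) ^ 2 := by
    rw [hrdef, norm_add_sq_real, hinner, hnv]
  clear_value s u I r
  -- bound on mixed term
  have h1 : -(‖x‖ ^ 2 / 1024) ≤ t * (u * I) := by
    have h2 : (2 : ℝ) ^ (-(10 : ℤ)) = 1 / 1024 := by norm_num
    rw [h2] at hlow
    have hI : -(‖x‖ ^ 2 * ‖v‖ / (1024 * t)) ≤ I := by
      rw [show -(‖x‖ ^ 2 * ‖v‖ / (1024 * t)) = -(1 / 1024 * ‖x‖ ^ 2 * ‖v‖ / t) from by ring]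
      exact hlow
    have := mul_le_mul_of_nonneg_left hI (le_of_lt (mul_pos ht hupos))
    have heq : t * u * -(‖x‖ ^ 2 * ‖v‖ / (1024 * t)) = -((u * ‖v‖) * ‖x‖ ^ 2 / 1024) := by
      field_simp
    rw [heq] at this
    nlinarith [this, huv, sq_nonneg ‖x‖]
  -- bound t*u ≤ ‖x‖/16
  have h3 : 16 * (t * u) ≤ ‖x‖ := by
    have h4 : 16 * t ≤ ‖x‖ * ‖v‖ := by
      have := (div_le_iff₀ hvpos).mp hx
      linarith
    calc 16 * (t * u) ≤ (‖x‖ * ‖v‖) * u := by nlinarith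
      _ ≤ ‖x‖ * (s * u) := by nlinarith
      _ = ‖x‖ := by rw [mul_comm s u, hus, mul_one]
  -- key: r² - t² ≥ ‖x‖²/2
  have ht2 : t ^ 2 = (t * u) ^ 2 + (t * (u * ‖v‖)) ^ 2 := by
    have h5 : (t * u) ^ 2 + (t * (u * ‖v‖)) ^ 2 = (t * u) ^ 2 * s ^ 2 := by
      rw [hs2]; ring
    rw [h5]
    calc t ^ 2 = t ^ 2 * (u * s) ^ 2 := by rw [hus]; ring
      _ = (t * u) ^ 2 * s ^ 2 := by ring
  have hq : (t * u) ^ 2 ≤ ‖x‖ ^ 2 / 256 := by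
    nlinarith [mul_pos ht hupos, h3]
  have key : ‖x‖ ^ 2 / 2 ≤ r ^ 2 - t ^ 2 := by
    rw [hr2, ht2]; linarith [h1, hq, sq_nonneg ‖x‖]
  have htr : t < r := by nlinarith [key, hrnn, ht, hxpos]
  have hrle : r ≤ ‖x‖ + t := by
    calc r = ‖x + t • vhat v‖ := hrdef
      _ ≤ ‖x‖ + ‖t • vhat v‖ := norm_add_le _ _
      _ = ‖x‖ + t * (u * ‖v‖) := by rw [hnv]
      _ ≤ ‖x‖ + t := by nlinarith
  have habs : |t - r| = r - t := by
    rw [abs_of_nonpos (by linarith), neg_sub]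
  have hdenpos : 0 < 4 * (t + ‖x‖) := by positivity
  have main : ‖x‖ ^ 2 / (4 * (t + ‖x‖)) ≤ |t - r| := by
    rw [habs, div_le_iff₀ hdenpos]
    nlinarith [key, htr, hrle]
  refine ⟨main, ?_⟩
  have hapos : 0 < ‖x‖ ^ 2 / (4 * (t + ‖x‖)) := by positivity
  calc 1 / (1 + |t - r|) ≤ 1 / (‖x‖ ^ 2 / (4 * (t + ‖x‖))) :=
        one_div_le_one_div_of_le hapos (by linarith)
    _ = 4 * (t + ‖x‖) / ‖x‖ ^ 2 := one_div_div _ _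
end
end

section
/- There exists a universal constant C > 0 such that for every t ≥ 0 and all x, v ∈ ℝ³ with x·v ≤ 0: |d(t,x,v)| · ( t + (1+|v|)·( |x·v| + |x| ) ) ≤ C·( t + |x| )·| t − |x + t·v̂| |. In particular, in the region x·v ≤ 0 the modulation d(t,x,v) is smaller than the distance to the light cone by the factor (t+|x|)/( t + (1+|v|)(|x·v|+|x|) ). -/
open scoped RealInnerProductSpace

noncomputable section

set_option maxHeartbeats 1000000 in
/-- In the region `x·v ≤ 0` the modulation `d(t,x,v)` is smaller than the distance to the
light cone by the factor `(t+|x|) / (t + (1+|v|)(|x·v|+|x|))`. -/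
theorem stmt8 :
    ∃ C : ℝ, 0 < C ∧
      ∀ t : ℝ, 0 ≤ t → ∀ x v : E3, ⟪x, v⟫ ≤ 0 →
        |dmod t x v| * (t + (1 + ‖v‖) * (|⟪x, v⟫| + ‖x‖)) ≤
          C * (t + ‖x‖) * |t - ‖x + t • vhat v‖| := by
  refine ⟨4, by norm_num, fun t ht x v hav => ?_⟩
  set a : ℝ := ⟪x, v⟫ with ha
  set r : ℝ := ‖x‖ with hr
  set s : ℝ := Real.sqrt (1 + ‖v‖ ^ 2) with hs
  set ρ : ℝ := Real.sqrt (a ^ 2 + r ^ 2) with hρ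
  set N : ℝ := ‖x + t • vhat v‖ with hN
  have hr0 : 0 ≤ r := norm_nonneg x
  have hN0 : 0 ≤ N := norm_nonneg _
  have hρ0 : 0 ≤ ρ := Real.sqrt_nonneg _
  have hssq : s ^ 2 = 1 + ‖v‖ ^ 2 := Real.sq_sqrt (by positivity)
  have hs0 : 0 < s := Real.sqrt_pos.2 (by positivity)
  have hs1 : 1 ≤ s := by nlinarith [sq_nonneg ‖v‖]
  have hsv : ‖v‖ ≤ s := by nlinarith [norm_nonneg v]
  have hρsq : ρ ^ 2 = a ^ 2 + r ^ 2 := Real.sq_sqrt (by positivity)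
  have hρr : r ≤ ρ := by nlinarith [sq_nonneg a]
  have hρa : -a ≤ ρ := by nlinarith [sq_nonneg r, sq_nonneg (ρ + a)]
  have habs : |a| = -a := abs_of_nonpos hav
  -- inner product and norm computations
  have hvh : ‖vhat v‖ = s⁻¹ * ‖v‖ := by
    rw [vhat, norm_smul, ← hs, Real.norm_eq_abs, abs_of_pos (by positivity)]
  have hinner : ⟪x, t • vhat v⟫ = t * (s⁻¹ * a) := by
    rw [vhat, real_inner_smul_right, real_inner_smul_right, ← hs, ← ha]
  have hNsq : N ^ 2 = r ^ 2 + 2 * (t * (s⁻¹ * a)) + t ^ 2 * (s⁻¹ * ‖v‖) ^ 2 := by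
    rw [hN, norm_add_sq_real, hinner, norm_smul, hvh, Real.norm_eq_abs, abs_of_nonneg ht, ← hr]
    ring
  -- key identity
  have hD : s * dmod t x v = t / s - (a + ρ) := by
    rw [dmod, ← ha, ← hr, ← hs, ← hρ, ← hssq]
    field_simp
  have hkey : (t / s - (a + ρ)) * (t / s - a + ρ) = t ^ 2 - N ^ 2 := by
    have h1 : (t / s - (a + ρ)) * (t / s - a + ρ) = (t / s) ^ 2 - 2 * a * (t / s) - r ^ 2 := by
      nlinarith [hρsq]
    rw [h1, hNsq]
    have h2 : s⁻¹ * s = 1 := inv_mul_cancel₀ hs0.ne'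
    linear_combination (-(t^2*s⁻¹^2)) * hssq + (t^2*(s⁻¹*s+1)) * h2
  clear_value a r s ρ N
  set P : ℝ := t / s - a + ρ with hP
  clear_value P
  have hts : 0 ≤ t / s := div_nonneg ht hs0.le
  have hP0 : 0 ≤ P := by rw [hP]; linarith
  set M : ℝ := t + (1 + ‖v‖) * (|a| + r) with hM
  clear_value M
  rcases eq_or_lt_of_le hP0 with hPz | hPpos
  · -- P = 0 forces t = 0, a = 0, ρ = 0, r = 0, hence d = 0
    rw [hP] at hPz
    have ht0 : t / s = 0 := by linarith
    have ht0' : t = 0 := by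
      rcases div_eq_zero_iff.mp ht0 with h | h
      · exact h
      · exact absurd h hs0.ne'
    have hρ0' : ρ = 0 := by linarith
    have ha0 : a = 0 := by linarith
    have hr0' : r = 0 := by nlinarith
    have hd0 : dmod t x v = 0 := by
      rw [dmod, ← ha, ← hr, ← hρ, ht0', ha0, hρ0']
      simp
    rw [hd0]
    simp only [abs_zero, zero_mul]
    rw [ht0', hr0']
    simp
  · -- main case
    have hdabs : |dmod t x v| * (s * P) = |t - N| * (t + N) := by
      have h1 : s * dmod t x v * P = (t - N) * (t + N) := by
        rw [hD, hkey]; ring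
      have h2 : |s * dmod t x v * P| = |t - N| * (t + N) := by
        rw [h1, abs_mul, abs_of_nonneg (by linarith : (0:ℝ) ≤ t + N)]
      rw [← h2, abs_mul, abs_mul, abs_of_pos hs0, abs_of_nonneg hP0]
      ring
    have hNle : N ≤ r + t := by
      have h1 : N ≤ ‖x‖ + ‖t • vhat v‖ := by rw [hN]; exact norm_add_le _ _
      have h2 : ‖t • vhat v‖ = t * (s⁻¹ * ‖v‖) := by
        rw [norm_smul, hvh, Real.norm_eq_abs, abs_of_nonneg ht]
      have h3 : s⁻¹ * ‖v‖ ≤ 1 := by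
        rw [inv_mul_le_iff₀ hs0]; simpa using hsv
      have h4 : t * (s⁻¹ * ‖v‖) ≤ t := by
        nlinarith [mul_nonneg ht (mul_nonneg (by positivity : (0:ℝ) ≤ s⁻¹) (norm_nonneg v))]
      rw [hr]; linarith [h1, h2 ▸ h4]
    have hsP : s * P = t + s * (-a + ρ) := by
      rw [hP]; field_simp; ring
    have hM2 : M ≤ 2 * (s * P) := by
      rw [hM, habs, hsP]
      nlinarith [mul_nonneg (by linarith : (0:ℝ) ≤ -a + r) (by linarith : (0:ℝ) ≤ 2 * s - (1 + ‖v‖))]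
    have hsPpos : 0 < s * P := mul_pos hs0 hPpos
    have hmain : |dmod t x v| * M * (s * P) ≤ 4 * (t + r) * |t - N| * (s * P) := by
      calc |dmod t x v| * M * (s * P) = (|dmod t x v| * (s * P)) * M := by ring
        _ = (|t - N| * (t + N)) * M := by rw [hdabs]
        _ ≤ (|t - N| * (2 * (t + r))) * (2 * (s * P)) := by
            apply mul_le_mul
            · exact mul_le_mul_of_nonneg_left (by linarith) (abs_nonneg _)
            · exact hM2
            · rw [hM]
              have hm := mul_nonneg (by positivity : (0:ℝ) ≤ 1 + ‖v‖)
                (add_nonneg (abs_nonneg a) hr0)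
              linarith
            · exact mul_nonneg (abs_nonneg _) (by linarith)
        _ = 4 * (t + r) * |t - N| * (s * P) := by ring
    have := le_of_mul_le_mul_right (by linarith [hmain] : |dmod t x v| * M * (s * P) ≤ (4 * (t + r) * |t - N|) * (s * P)) hsPpos
    linarith
end
end
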